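/- Let K be a field of characteristic zero, 1 ≤ p ≤ n, and F ∈ K[x₀,…,xₙ] a homogeneous form with partial derivatives F_k = ∂F/∂x_k. Suppose that for all λ₁,…,λ_p ∈ K the form F₀ + Σ_{k=1}^p λ_k F_k has Waring rank ≥ m over K, and that F₁,…,F_p are linearly independent over K. Then the Waring rank of F over K is at least m + p. -/

import Mathlib

open MvPolynomial

/-- `L` is a linear form (a `K`-linear combination of the variables). -/
def IsLinearForm {K : Type*} [CommSemiring K] {n : ℕ}
    (L : MvPolynomial (Fin (n + 1)) K) : Prop :=
  ∃ a : Fin (n + 1) → K, L = ∑ i, C (a i) * X i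

theorem stmt_4 {K : Type*} [Field K] [CharZero K] (n d p m : ℕ)
    (hp : 1 ≤ p) (hpn : p ≤ n)
    (F : MvPolynomial (Fin (n + 1)) K) (hF : F.IsHomogeneous d)
    (hind : LinearIndependent K fun k : Fin p => pderiv (Fin.succ (Fin.castLE hpn k)) F)
    (hlow : ∀ lam : Fin p → K, ∀ (s : ℕ) (c : Fin s → K)
        (L : Fin s → MvPolynomial (Fin (n + 1)) K), (∀ j, IsLinearForm (L j)) →
        pderiv 0 F + ∑ k : Fin p, C (lam k) * pderiv (Fin.succ (Fin.castLE hpn k)) F =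
          ∑ j, C (c j) * L j ^ (d - 1) → m ≤ s) :
    ∀ (s : ℕ) (c : Fin s → K) (L : Fin s → MvPolynomial (Fin (n + 1)) K),
      (∀ j, IsLinearForm (L j)) → F = ∑ j, C (c j) * L j ^ d → m + p ≤ s := by
  intro s c L hL hFeq
  classical
  choose a ha using hL
  -- the derivative of a linear form
  have hdL : ∀ (k : Fin (n + 1)) (j : Fin s), pderiv k (L j) = C (a j k) := by
    intro k j
    rw [ha j, map_sum]
    rw [Finset.sum_eq_single k (fun i _ hik => by
      rw [pderiv_C_mul, pderiv_X_of_ne hik, mul_zero]) (by simp)]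
    rw [pderiv_C_mul, pderiv_X_self, mul_one]
  -- the coefficient vectors of the partial derivatives
  set u : Fin (n + 1) → Fin s → K := fun k j => (d : K) * c j * a j k with hu
  -- the linear map sending a coefficient vector to its combination of powers
  set T : (Fin s → K) →ₗ[K] MvPolynomial (Fin (n + 1)) K :=
    Fintype.linearCombination K (fun j => L j ^ (d - 1)) with hTdef
  have hT : ∀ μ : Fin s → K, T μ = ∑ j, C (μ j) * L j ^ (d - 1) := by
    intro μ
    rw [hTdef, Fintype.linearCombination_apply]
    exact Finset.sum_congr rfl fun j _ => smul_eq_C_mul _ _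
  -- key computation of the partial derivatives
  have key : ∀ k : Fin (n + 1), pderiv k F = T (u k) := by
    intro k
    rw [hT, hFeq, map_sum]
    refine Finset.sum_congr rfl fun j _ => ?_
    rw [pderiv_C_mul, Derivation.leibniz_pow, hdL, smul_eq_mul, nsmul_eq_mul,
      ← map_natCast (C : K →+* MvPolynomial (Fin (n + 1)) K) d]
    simp only [hu]
    rw [map_mul, map_mul]
    ring
  -- the family of coefficient vectors of the relevant derivatives
  set w : Fin p → Fin s → K := fun k => u (Fin.succ (Fin.castLE hpn k)) with hw
  have hwind : LinearIndependent K w := by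
    refine LinearIndependent.of_comp T ?_
    have : (⇑T ∘ w) = fun k : Fin p => pderiv (Fin.succ (Fin.castLE hpn k)) F := by
      funext k; simp [Function.comp, key, hw]
    rw [this]
    exact hind
  -- hence `p ≤ s`
  have hps : p ≤ s := by
    simpa using hwind.fintype_card_le_finrank
  -- the matrix whose rows are the `w k`
  set M : Matrix (Fin p) (Fin s) K := Matrix.of w with hM
  -- its transposed map is injective
  have hinj : Function.Injective (Matrix.mulVecLin M.transpose) := by
    rw [Matrix.coe_mulVecLin, Matrix.mulVec_injective_iff]
    exact hwind
  -- so the rank of `M` is `p`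
  have hrank : M.rank = p := by
    rw [← Matrix.rank_transpose, Matrix.rank]
    rw [LinearMap.finrank_range_of_inj hinj]
    simp
  -- hence the columns of `M` span everything
  have hspan : Submodule.span K (Set.range M.transpose) = ⊤ := by
    change Submodule.span K (Set.range M.col) = ⊤
    rw [← Matrix.range_mulVecLin]
    apply Submodule.eq_top_of_finrank_eq
    rw [← Matrix.rank, hrank, Module.finrank_fin_fun]
  -- extract a basis from the columns
  obtain ⟨b, hbsub, hbspan, hbind⟩ := exists_linearIndependent K (Set.range M.transpose)
  rw [hspan] at hbspan
  have hbfin : b.Finite := hbind.setFinite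
  have : Fintype b := hbfin.fintype
  have hbbasis : Module.Basis b K (Fin p → K) :=
    Module.Basis.mk hbind (by rw [Subtype.range_coe, hbspan])
  have hbcard : Fintype.card b = p := by
    have := Module.finrank_eq_card_basis hbbasis
    simpa using this.symm
  -- choose preimage indices for the basis columns
  have hpre : ∀ x : b, ∃ j : Fin s, M.transpose j = (x : Fin p → K) := fun x => hbsub x.2
  choose g hg using hpre
  set ε : Fin p ≃ b := (Fintype.equivFinOfCardEq hbcard).symm with hε
  set gg : Fin p → Fin s := fun i => g (ε i) with hgg
  have hcols : ∀ i : Fin p, M.transpose (gg i) = ((ε i : b) : Fin p → K) := fun i => hg (ε i)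
  have hcolind : LinearIndependent K fun i : Fin p => M.transpose (gg i) := by
    have : (fun i : Fin p => M.transpose (gg i)) = fun i : Fin p => ((ε i : b) : Fin p → K) := by
      funext i; exact hcols i
    rw [this]
    exact hbind.comp ε ε.injective
  have hgginj : Function.Injective gg := by
    intro i1 i2 h
    have : ((ε i1 : b) : Fin p → K) = ((ε i2 : b) : Fin p → K) := by
      rw [← hcols, ← hcols, h]
    exact ε.injective (Subtype.coe_injective this)
  -- a basis of `K^p` from the selected columns
  have : Nonempty (Fin p) := ⟨⟨0, hp⟩⟩
  set B : Module.Basis (Fin p) K (Fin p → K) :=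
    basisOfLinearIndependentOfCardEqFinrank hcolind (by simp) with hB
  have hBapp : ∀ i, B i = M.transpose (gg i) := by
    intro i
    rw [hB, coe_basisOfLinearIndependentOfCardEqFinrank]
  -- the functional sending the selected columns to the prescribed values
  set ψ : (Fin p → K) →ₗ[K] K := B.constr K (fun i => -(u 0 (gg i))) with hψ
  set lam : Fin p → K := fun k => ψ (Pi.single k 1) with hlam
  have hψsum : ∀ μ : Fin p → K, ψ μ = ∑ k, μ k * lam k := by
    intro μ
    have hμ : μ = ∑ k, μ k • (Pi.single k 1 : Fin p → K) := by
      funext i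
      simp [Finset.sum_apply, Pi.single_apply]
    calc ψ μ = ψ (∑ k, μ k • (Pi.single k 1 : Fin p → K)) := by rw [← hμ]
      _ = ∑ k, μ k * lam k := by
          rw [map_sum]
          exact Finset.sum_congr rfl fun k _ => by rw [map_smul, smul_eq_mul, hlam]
  have hsolve : ∀ i : Fin p, ∑ k, w k (gg i) * lam k = -(u 0 (gg i)) := by
    intro i
    have h1 : ψ (M.transpose (gg i)) = -(u 0 (gg i)) := by
      rw [← hBapp, hψ, Module.Basis.constr_basis]
    rw [hψsum] at h1
    exact h1
  -- the combined coefficient vector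
  set v : Fin s → K := fun j => u 0 j + ∑ k, lam k * w k j with hv
  have hveq : pderiv 0 F + ∑ k : Fin p, C (lam k) * pderiv (Fin.succ (Fin.castLE hpn k)) F
      = T v := by
    have : ∀ k : Fin p, C (lam k) * pderiv (Fin.succ (Fin.castLE hpn k)) F
        = T (lam k • w k) := by
      intro k
      rw [key, map_smul, smul_eq_C_mul]
    simp_rw [this, key 0]
    rw [← map_sum, ← map_add]
    congr 1
    funext j
    simp [hv, hw, Finset.sum_apply]
  -- the coefficient vanishes on the selected indices
  have hvzero : ∀ i : Fin p, v (gg i) = 0 := by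
    intro i
    rw [hv]
    simp only
    rw [show (∑ k, lam k * w k (gg i)) = ∑ k, w k (gg i) * lam k from
      Finset.sum_congr rfl fun k _ => mul_comm _ _, hsolve i]
    ring
  -- the complement of the selected indices
  set S : Finset (Fin s) := Finset.image gg Finset.univ with hS
  have hScard : S.card = p := by
    rw [hS, Finset.card_image_of_injective _ hgginj, Finset.card_univ, Fintype.card_fin]
  have hSccard : Sᶜ.card = s - p := by
    rw [Finset.card_compl, hScard, Fintype.card_fin]
  -- the sum reduces to the complement
  have hsum : T v = ∑ j ∈ Sᶜ, C (v j) * L j ^ (d - 1) := by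
    rw [hT]
    rw [← Finset.sum_subset (Finset.subset_univ Sᶜ)]
    intro j _ hj
    have hjS : j ∈ S := by
      by_contra h
      exact hj (Finset.mem_compl.mpr h)
    obtain ⟨i, _, hi⟩ := Finset.mem_image.mp hjS
    rw [← hi, hvzero i, map_zero, zero_mul]
  -- reindex the complement by `Fin (s - p)`
  set eqv : (Sᶜ : Finset (Fin s)) ≃ Fin (s - p) := Sᶜ.equivFinOfCardEq hSccard with heqv
  set c' : Fin (s - p) → K := fun t => v (eqv.symm t) with hc'
  set L' : Fin (s - p) → MvPolynomial (Fin (n + 1)) K := fun t => L (eqv.symm t) with hL'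
  have hsum2 : (∑ j ∈ Sᶜ, C (v j) * L j ^ (d - 1)) = ∑ t, C (c' t) * L' t ^ (d - 1) := by
    rw [← Finset.sum_coe_sort Sᶜ (fun j => C (v j) * L j ^ (d - 1))]
    rw [← Equiv.sum_comp eqv.symm (fun x : (Sᶜ : Finset (Fin s)) => C (v ↑x) * L ↑x ^ (d - 1))]
  have hm : m ≤ s - p := by
    refine hlow lam (s - p) c' L' (fun t => ⟨a (eqv.symm t), ha _⟩) ?_
    rw [hveq, hsum, hsum2]
  omega
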